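/- arXiv:1912.03919 — 4 statements merged into one kernel-verified Lean document; each statement's English description precedes it below -/
import Mathlib

section
/- Let k ≥ 2, let X = {x_1,…,x_n} be a finite set, and let C = {C_1,…,C_t} be a collection of 3-element subsets of X. If there exists a subcollection C' ⊆ C such that every element of X belongs to at least one and at most k members of C', then the gadget graph G_{X,C} has a total [1,k]-dominating set; explicitly, D = (⋃_{1≤j≤t} P_j) ∪ {c_j : C_j ∈ C'} ∪ (⋃_{C_j ∉ C'} L_j) is a total [1,k]-dominating set of G_{X,C}. -/
/-- `D` is a `[1,k]`-dominating set of `G`: every vertex outside `D` is adjacent to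
at least one and at most `k` vertices of `D`. -/
def IsOneKDom {V : Type*} (G : SimpleGraph V) (k : ℕ) (D : Set V) : Prop :=
  ∀ v ∉ D, 1 ≤ {u ∈ D | G.Adj v u}.ncard ∧ {u ∈ D | G.Adj v u}.ncard ≤ k

/-- `D` is a total `[1,k]`-dominating set of `G`: every vertex is adjacent to
at least one and at most `k` vertices of `D`. -/
def IsTotalOneKDom {V : Type*} (G : SimpleGraph V) (k : ℕ) (D : Set V) : Prop :=
  ∀ v : V, 1 ≤ {u ∈ D | G.Adj v u}.ncard ∧ {u ∈ D | G.Adj v u}.ncard ≤ k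

/-- The `[1,k]`-domination number: minimum cardinality of a `[1,k]`-dominating set. -/
noncomputable def oneKDomNum {V : Type*} [Fintype V] (G : SimpleGraph V) (k : ℕ) : ℕ :=
  sInf {m | ∃ D : Set V, IsOneKDom G k D ∧ D.ncard = m}

/-- The total `[1,k]`-domination number: minimum cardinality of a total
`[1,k]`-dominating set. -/
noncomputable def totalOneKDomNum {V : Type*} [Fintype V] (G : SimpleGraph V) (k : ℕ) : ℕ :=
  sInf {m | ∃ D : Set V, IsTotalOneKDom G k D ∧ D.ncard = m}

/-- The lexicographic product `G ∘ H`. -/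
def lexProd {α β : Type*} (G : SimpleGraph α) (H : SimpleGraph β) :
    SimpleGraph (α × β) where
  Adj a b := G.Adj a.1 b.1 ∨ (a.1 = b.1 ∧ H.Adj a.2 b.2)
  symm := by
    constructor
    rintro ⟨g, h⟩ ⟨g', h'⟩ (hadj | ⟨rfl, hadj⟩)
    · exact Or.inl hadj.symm
    · exact Or.inr ⟨rfl, hadj.symm⟩
  loopless := by
    constructor
    rintro ⟨g, h⟩ (hadj | ⟨-, hadj⟩)
    · exact G.loopless.irrefl g hadj
    · exact H.loopless.irrefl h hadj

/-- Vertices of the gadget graph `G_{X,C}`: the elements `x i` of `X`, one vertex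
`c j` per set `C j`, and for each `j` the vertices `p j j'` and leaves `l j j'`. -/
inductive GadgetV (n t k : ℕ) : Type
  | x : Fin n → GadgetV n t k
  | c : Fin t → GadgetV n t k
  | p : Fin t → Fin k → GadgetV n t k
  | l : Fin t → Fin k → GadgetV n t k
  deriving DecidableEq

/-- The gadget graph `G_{X,C}`: edges `c j — p j j'`, `p j j' — l j j'`, and
`x i — c j` whenever `x i ∈ C j`. -/
def gadgetGraph (n t k : ℕ) (C : Fin t → Finset (Fin n)) :
    SimpleGraph (GadgetV n t k) :=
  SimpleGraph.fromRel (fun a b =>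
    match a, b with
    | .c j, .p j' _ => j = j'
    | .p j i, .l j' i' => j = j' ∧ i = i'
    | .x i, .c j => i ∈ C j
    | _, _ => False)

/-- If `C' ⊆ C` covers every element of `X` at least once and at most `k` times, then
`D = (⋃ j, P j) ∪ {c j : j ∈ C'} ∪ (⋃_{j ∉ C'} L j)` is a total `[1,k]`-dominating
set of the gadget graph `G_{X,C}`. -/
theorem gadgetGraph_isTotalOneKDom
    {n t k : ℕ} (hk : 2 ≤ k) (C : Fin t → Finset (Fin n))
    (hC3 : ∀ j, (C j).card = 3) (C' : Finset (Fin t))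
    (hcov : ∀ i : Fin n,
      1 ≤ (C'.filter (fun j => i ∈ C j)).card ∧ (C'.filter (fun j => i ∈ C j)).card ≤ k) :
    IsTotalOneKDom (gadgetGraph n t k C) k
      ({v : GadgetV n t k | ∃ j i, v = GadgetV.p j i} ∪
        {v : GadgetV n t k | ∃ j ∈ C', v = GadgetV.c j} ∪
        {v : GadgetV n t k | ∃ j ∉ C', ∃ i, v = GadgetV.l j i}) := by
  have hk1 : 1 ≤ k := le_trans one_le_two hk
  set D : Set (GadgetV n t k) :=
    ({v : GadgetV n t k | ∃ j i, v = GadgetV.p j i} ∪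
      {v : GadgetV n t k | ∃ j ∈ C', v = GadgetV.c j} ∪
      {v : GadgetV n t k | ∃ j ∉ C', ∃ i, v = GadgetV.l j i}) with hD
  intro v
  cases v with
  | x i =>
    have hS : {u ∈ D | (gadgetGraph n t k C).Adj (GadgetV.x i) u} =
        GadgetV.c '' ↑(C'.filter fun j => i ∈ C j) := by
      ext u
      cases u with
      | x i' => simp [hD, gadgetGraph]
      | c j => simp [hD, gadgetGraph, and_comm, eq_comm]
      | p j i' => simp [hD, gadgetGraph]
      | l j i' => simp [hD, gadgetGraph]
    rw [hS, Set.ncard_image_of_injective _ (fun a b h => by injection h),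
      Set.ncard_coe_finset]
    exact hcov i
  | c j =>
    have hS : {u ∈ D | (gadgetGraph n t k C).Adj (GadgetV.c j) u} =
        Set.range (GadgetV.p j) := by
      ext u
      cases u with
      | x i' => simp [hD, gadgetGraph]
      | c j' => simp [hD, gadgetGraph]
      | p j' i' => simp [hD, gadgetGraph, eq_comm]
      | l j' i' => simp [hD, gadgetGraph]
    rw [hS, ← Set.image_univ,
      Set.ncard_image_of_injective _ (fun a b h => by injection h),
      Set.ncard_univ, Nat.card_eq_fintype_card, Fintype.card_fin]
    exact ⟨hk1, le_refl k⟩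
  | p j i =>
    by_cases hj : j ∈ C'
    · have hS : {u ∈ D | (gadgetGraph n t k C).Adj (GadgetV.p j i) u} =
          {GadgetV.c j} := by
        ext u
        cases u with
        | x i' => simp [hD, gadgetGraph]
        | c j' => simp [hD, gadgetGraph, eq_comm]; rintro rfl; exact hj
        | p j' i' => simp [hD, gadgetGraph]
        | l j' i' =>
          simp [hD, gadgetGraph]
          rintro h rfl
          exact absurd hj h
      rw [hS, Set.ncard_singleton]
      exact ⟨le_refl 1, hk1⟩
    · have hS : {u ∈ D | (gadgetGraph n t k C).Adj (GadgetV.p j i) u} =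
          {GadgetV.l j i} := by
        ext u
        cases u with
        | x i' => simp [hD, gadgetGraph]
        | c j' => simp [hD, gadgetGraph, eq_comm]; rintro h rfl; exact hj h
        | p j' i' => simp [hD, gadgetGraph]
        | l j' i' =>
          simp [hD, gadgetGraph, eq_comm]
          rintro rfl rfl
          exact hj
      rw [hS, Set.ncard_singleton]
      exact ⟨le_refl 1, hk1⟩
  | l j i =>
    have hS : {u ∈ D | (gadgetGraph n t k C).Adj (GadgetV.l j i) u} =
        {GadgetV.p j i} := by
      ext u
      cases u with
      | x i' => simp [hD, gadgetGraph]
      | c j' => simp [hD, gadgetGraph]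
      | p j' i' => simp [hD, gadgetGraph, eq_comm]
      | l j' i' => simp [hD, gadgetGraph]
    rw [hS, Set.ncard_singleton]
    exact ⟨le_refl 1, hk1⟩
end

section
/- Let k ≥ 2, let X = {x_1,…,x_n} be a finite set, and let C = {C_1,…,C_t} be a collection of 3-element subsets of X. Then every total [1,k]-dominating set D of the gadget graph G_{X,C} contains all vertices p_{j,j'} (1 ≤ j ≤ t, 1 ≤ j' ≤ k) and contains no vertex of X, i.e., ⋃_{j=1}^{t} P_j ⊆ D and D ∩ X = ∅. -/
section aux

variable {n t k : ℕ}

instance : Finite (GadgetV n t k) := by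
  have hinj : Function.Injective
      (fun v : GadgetV n t k =>
        match v with
        | .x i => (Sum.inl i : Fin n ⊕ Fin t ⊕ (Fin t × Fin k) ⊕ (Fin t × Fin k))
        | .c j => Sum.inr (Sum.inl j)
        | .p j i => Sum.inr (Sum.inr (Sum.inl (j, i)))
        | .l j i => Sum.inr (Sum.inr (Sum.inr (j, i)))) := by
    intro a b h
    cases a <;> cases b <;> simp_all
  exact Finite.of_injective _ hinj

lemma gadget_adj_l (C : Fin t → Finset (Fin n)) (j : Fin t) (i : Fin k)
    (u : GadgetV n t k) :
    (gadgetGraph n t k C).Adj (GadgetV.l j i) u ↔ u = GadgetV.p j i := by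
  cases u <;> simp [gadgetGraph, SimpleGraph.fromRel_adj]

lemma gadget_adj_x (C : Fin t → Finset (Fin n)) (i : Fin n)
    (u : GadgetV n t k) :
    (gadgetGraph n t k C).Adj (GadgetV.x i) u ↔ ∃ j, u = GadgetV.c j ∧ i ∈ C j := by
  cases u <;> simp [gadgetGraph, SimpleGraph.fromRel_adj]

lemma gadget_adj_c_p (C : Fin t → Finset (Fin n)) (j : Fin t) (i : Fin k) :
    (gadgetGraph n t k C).Adj (GadgetV.c j) (GadgetV.p j i) := by
  simp [gadgetGraph, SimpleGraph.fromRel_adj]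

end aux

/-- Every total `[1,k]`-dominating set of the gadget graph `G_{X,C}` contains all the
vertices `p j j'` and no vertex of `X`. -/
theorem gadgetGraph_totalOneKDom_structure
    {n t k : ℕ} (hk : 2 ≤ k) (C : Fin t → Finset (Fin n))
    (hC3 : ∀ j, (C j).card = 3)
    (D : Set (GadgetV n t k)) (hD : IsTotalOneKDom (gadgetGraph n t k C) k D) :
    (∀ (j : Fin t) (i : Fin k), GadgetV.p j i ∈ D) ∧ (∀ i : Fin n, GadgetV.x i ∉ D) := by
  have hP : ∀ (j : Fin t) (i : Fin k), GadgetV.p j i ∈ D := by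
    intro j i
    have h1 := (hD (GadgetV.l j i)).1
    obtain ⟨u, huD, huAdj⟩ := Set.nonempty_of_ncard_ne_zero (show
      {u ∈ D | (gadgetGraph n t k C).Adj (GadgetV.l j i) u}.ncard ≠ 0 by omega)
    rwa [(gadget_adj_l C j i u).mp huAdj] at huD
  refine ⟨hP, ?_⟩
  intro i hxi
  -- x i has a neighbor in D, which must be some c j with i ∈ C j
  have h1 := (hD (GadgetV.x i)).1
  obtain ⟨u, huD, huAdj⟩ := Set.nonempty_of_ncard_ne_zero (by omega :
    {u ∈ D | (gadgetGraph n t k C).Adj (GadgetV.x i) u}.ncard ≠ 0)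
  obtain ⟨j, rfl, hij⟩ := (gadget_adj_x C i u).mp huAdj
  -- now c j has ≥ k+1 neighbors in D
  have h2 := (hD (GadgetV.c j)).2
  set S := {u ∈ D | (gadgetGraph n t k C).Adj (GadgetV.c j) u} with hS
  have hsub : insert (GadgetV.x i) (Set.range (GadgetV.p j : Fin k → GadgetV n t k)) ⊆ S := by
    rintro v (rfl | ⟨i', rfl⟩)
    · exact ⟨hxi, ((gadget_adj_x C i (GadgetV.c j)).mpr ⟨j, rfl, hij⟩).symm⟩
    · exact ⟨hP j i', gadget_adj_c_p C j i'⟩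
  have hpinj : Function.Injective (GadgetV.p j : Fin k → GadgetV n t k) := by
    intro a b h; simpa using h
  have hcard : (insert (GadgetV.x i)
      (Set.range (GadgetV.p j : Fin k → GadgetV n t k))).ncard = k + 1 := by
    rw [Set.ncard_insert_of_notMem (by rintro ⟨i', h⟩; simp at h) (Set.toFinite _),
      ← Set.image_univ, Set.ncard_image_of_injective _ hpinj, Set.ncard_univ,
      Nat.card_eq_fintype_card, Fintype.card_fin]
  have := Set.ncard_le_ncard hsub (Set.toFinite S)
  omega
end

section
/- Let G be a finite simple graph on at least two vertices and let H be a finite simple graph with at least one vertex. The lexicographic product G ∘ H is connected and bipartite if and only if G is connected and bipartite and H is edgeless. -/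
section LexProdAux
open SimpleGraph

lemma lexProd_adj' {α β : Type*} (G : SimpleGraph α) (H : SimpleGraph β)
    (a b : α × β) :
    (lexProd G H).Adj a b ↔ G.Adj a.1 b.1 ∨ (a.1 = b.1 ∧ H.Adj a.2 b.2) := Iff.rfl

lemma lexProd_bot_eq {α β : Type*} (G : SimpleGraph α) :
    lexProd G (⊥ : SimpleGraph β) = G.comap Prod.fst := by
  ext ⟨g, h⟩ ⟨g', h'⟩
  simp [lexProd_adj']

lemma lexProd_exists_G_edge {α β : Type*} {G : SimpleGraph α} {H : SimpleGraph β}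
    {a b : α × β} (w : (lexProd G H).Walk a b) (hne : a.1 ≠ b.1) :
    ∃ x y, G.Adj x y := by
  induction w with
  | nil => exact absurd rfl hne
  | cons h p ih =>
    rcases h with h | ⟨heq, _⟩
    · exact ⟨_, _, h⟩
    · exact ih (heq ▸ hne)

lemma exists_adj_of_connected {α : Type*} [Fintype α] (hα : 2 ≤ Fintype.card α)
    {G : SimpleGraph α} (hc : G.Connected) (g : α) : ∃ g', G.Adj g g' := by
  have : Nontrivial α := Fintype.one_lt_card_iff_nontrivial.mp hα
  obtain ⟨g', hgg'⟩ := exists_ne g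
  obtain ⟨w⟩ := hc g g'
  cases w with
  | nil => exact absurd rfl hgg'
  | cons h p => exact ⟨_, h⟩

lemma comap_fst_reachable_of_walk {α β : Type*} {G : SimpleGraph α} {g g' : α}
    (h : β) (w : G.Walk g g') :
    (G.comap (Prod.fst : α × β → α)).Reachable (g, h) (g', h) := by
  induction w with
  | nil => exact Reachable.refl _
  | cons hadj p ih => exact Reachable.trans (Adj.reachable (by exact hadj)) ih

end LexProdAux

/-- For a finite graph `G` on at least two vertices and a finite graph `H` with at
least one vertex, `G ∘ H` is connected and bipartite iff `G` is connected and
bipartite and `H` is edgeless. -/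
theorem lexProd_connected_colorable_two_iff
    {α β : Type*} [Fintype α] [Fintype β] [Nonempty β]
    (hα : 2 ≤ Fintype.card α)
    (G : SimpleGraph α) (H : SimpleGraph β) :
    ((lexProd G H).Connected ∧ (lexProd G H).Colorable 2) ↔
      (G.Connected ∧ G.Colorable 2 ∧ H = ⊥) := by
  haveI hnt : Nontrivial α := Fintype.one_lt_card_iff_nontrivial.mp hα
  haveI hneα : Nonempty α := inferInstance
  obtain ⟨b0⟩ := (inferInstance : Nonempty β)
  constructor
  · rintro ⟨hconn, ⟨c⟩⟩
    have hHbot : H = ⊥ := by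
      ext x y
      simp only [SimpleGraph.bot_adj, iff_false]
      intro hxy
      obtain ⟨g, g', hgg'⟩ := exists_pair_ne α
      obtain ⟨w⟩ := hconn.preconnected (g, x) (g', x)
      obtain ⟨u, v, huv⟩ := lexProd_exists_G_edge w hgg'
      have h1 := c.valid (show (lexProd G H).Adj (u, x) (u, y) from Or.inr ⟨rfl, hxy⟩)
      have h2 := c.valid (show (lexProd G H).Adj (u, x) (v, x) from Or.inl huv)
      have h3 := c.valid (show (lexProd G H).Adj (u, y) (v, x) from Or.inl huv)
      have b1 := (c (u, x)).isLt
      have b2 := (c (u, y)).isLt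
      have b3 := (c (v, x)).isLt
      have n1 : (c (u, x)).val ≠ (c (u, y)).val := fun h => h1 (Fin.val_injective h)
      have n2 : (c (u, x)).val ≠ (c (v, x)).val := fun h => h2 (Fin.val_injective h)
      have n3 : (c (u, y)).val ≠ (c (v, x)).val := fun h => h3 (Fin.val_injective h)
      omega
    subst hHbot
    rw [lexProd_bot_eq] at hconn
    refine ⟨SimpleGraph.Connected.mk fun g g' => ?_, ?_, rfl⟩
    · exact (hconn.preconnected (g, b0) (g', b0)).map
        (⟨Prod.fst, fun {a b} h => h⟩ : (G.comap (Prod.fst : α × β → α)) →g G)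
    · exact ⟨SimpleGraph.Coloring.mk (fun g => c (g, b0))
        (fun {a b} h => c.valid (show (lexProd G ⊥).Adj (a, b0) (b, b0) from Or.inl h))⟩
  · rintro ⟨hconn, ⟨c⟩, rfl⟩
    rw [lexProd_bot_eq]
    refine ⟨SimpleGraph.Connected.mk fun p q => ?_, ?_⟩
    · obtain ⟨pg, ph⟩ := p
      obtain ⟨qg, qh⟩ := q
      obtain ⟨g'', hadj⟩ := exists_adj_of_connected hα hconn qg
      obtain ⟨w⟩ := hconn.preconnected pg g''
      have r1 := comap_fst_reachable_of_walk (β := β) ph w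
      have r2 : (G.comap (Prod.fst : α × β → α)).Reachable (g'', ph) (qg, qh) :=
        SimpleGraph.Adj.reachable (by exact hadj.symm)
      exact r1.trans r2
    · exact ⟨SimpleGraph.Coloring.mk (fun p => c p.1) (fun {a b} h => c.valid h)⟩
end

section
/- Let k ≥ 1, let G be a finite simple graph, let K̄_{k+1} be the edgeless graph on k+1 vertices, and let D be a [1,k]-dominating set of the lexicographic product G ∘ K̄_{k+1}. If a vertex g of G has k+1 pairwise distinct neighbors g_1, …, g_{k+1} in G such that D intersects the H-layer H^{g_i} for every i = 1, …, k+1, then D contains the entire H-layer H^g over g. -/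
/-- If a vertex `g` of `G` has `k+1` pairwise distinct neighbours whose layers all
meet a `[1,k]`-dominating set `D` of `G ∘ K̄_(k+1)`, then `D` contains the whole
layer over `g`. -/
theorem layer_subset_of_neighbors_meet
    {α : Type*} [Fintype α] (k : ℕ) (hk : 1 ≤ k) (G : SimpleGraph α)
    (D : Set (α × Fin (k + 1)))
    (hD : IsOneKDom (lexProd G (⊥ : SimpleGraph (Fin (k + 1)))) k D)
    (g : α) (gs : Fin (k + 1) → α) (hinj : Function.Injective gs)
    (hadj : ∀ i, G.Adj g (gs i))
    (hmeet : ∀ i, ∃ h : Fin (k + 1), (gs i, h) ∈ D) :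
    ∀ h : Fin (k + 1), (g, h) ∈ D := by
  intro h
  by_contra hmem
  obtain ⟨-, hle⟩ := hD (g, h) hmem
  choose hs hhs using hmeet
  set f : Fin (k + 1) → α × Fin (k + 1) := fun i => (gs i, hs i) with hf
  have hfi : Function.Injective f := by
    intro i j hij
    exact hinj (congrArg Prod.fst hij)
  have hsub : Set.range f ⊆ {u ∈ D | (lexProd G (⊥ : SimpleGraph (Fin (k + 1)))).Adj (g, h) u} := by
    rintro u ⟨i, rfl⟩
    exact ⟨hhs i, Or.inl (hadj i)⟩
  have hfin : {u ∈ D | (lexProd G (⊥ : SimpleGraph (Fin (k + 1)))).Adj (g, h) u}.Finite :=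
    Set.toFinite _
  have hcard : (Set.range f).ncard = k + 1 := by
    classical
    rw [Set.ncard_eq_toFinset_card', Set.toFinset_range,
      Finset.card_image_of_injective _ hfi]
    simp
  have := Set.ncard_le_ncard hsub hfin
  omega
end
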